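/- Fix nodes α, β and total budget k_g > 0, and define h : ℝ → ℝ by h(k₁) = Σ_{i,j} c_i b_{ji} + k₁ (θ_α/2)(1 + c_α) s_α + (k_g − k₁)(θ_β/2)(Σ_i c_i b_{βi} + r_β) + k₁ (k_g − k₁)(θ_α θ_β/4)(1 + c_α) b_{βα}, the single-camp two-phase objective when the camp invests k₁ on node α in the first phase and k_g − k₁ on node β in the second phase. If θ_α θ_β (1 + c_α) b_{βα} > 0, then h is a strictly concave quadratic, and its maximum over the interval [0, k_g] is attained at the unique point k₁* = min{ max{ k_g/2 + s_α/(θ_β b_{βα}) − (Σ_i c_i b_{βi} + r_β)/(θ_α b_{βα} (1 + c_α)), 0 }, k_g }. -/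
import Mathlib
set_option maxHeartbeats 800000


/-- for fixed nodes `α, β` and budget `kg > 0`, the single-camp
two-phase objective `h(k₁)` (invest `k₁` on `α` in phase 1 and `kg - k₁` on `β`
in phase 2) is, under `θ_α θ_β (1+c_α) b_{βα} > 0`, a strictly concave quadratic
whose maximum over `[0, kg]` is attained at the unique point
`k₁* = min (max (kg/2 + s_α/(θ_β b_{βα}) − (∑_i c_i b_{βi} + r_β)/(θ_α b_{βα}(1+c_α))) 0) kg`. -/
theorem single_camp_optimal_budget_split (n : ℕ) (hn : 0 < n)
    (W : Matrix (Fin n) (Fin n) ℝ)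
    (hW : ∀ i, ∑ j, |W i j| < 1)
    (w0 θ z0 : Fin n → ℝ)
    (Δ : Matrix (Fin n) (Fin n) ℝ) (hΔ : Δ = (1 - W)⁻¹)
    (r : Fin n → ℝ) (hr : ∀ i, r i = ∑ j, Δ j i)
    (c : Fin n → ℝ) (hc : ∀ i, c i = w0 i * z0 i)
    (b : Matrix (Fin n) (Fin n) ℝ) (hb : ∀ j i, b j i = r j * w0 j * Δ j i)
    (s : Fin n → ℝ) (hs : ∀ i, s i = ∑ j, b j i)
    (α β : Fin n) (kg : ℝ) (hkg : 0 < kg)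
    (h : ℝ → ℝ)
    (hh : ∀ k₁ : ℝ, h k₁ =
      (∑ i, ∑ j, c i * b j i)
      + k₁ * (θ α / 2) * (1 + c α) * s α
      + (kg - k₁) * (θ β / 2) * ((∑ i, c i * b β i) + r β)
      + k₁ * (kg - k₁) * (θ α * θ β / 4) * (1 + c α) * b β α)
    (hpos : 0 < θ α * θ β * (1 + c α) * b β α)
    (k₁star : ℝ)
    (hk₁star : k₁star =
      min (max (kg / 2 + s α / (θ β * b β α)
        - ((∑ i, c i * b β i) + r β) / (θ α * b β α * (1 + c α))) 0) kg) :
    (∃ A B C : ℝ, A < 0 ∧ ∀ t : ℝ, h t = A * t ^ 2 + B * t + C) ∧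
    StrictConcaveOn ℝ Set.univ h ∧
    k₁star ∈ Set.Icc 0 kg ∧
    (∀ k₁ ∈ Set.Icc 0 kg, h k₁ ≤ h k₁star) ∧
    (∀ k₁ ∈ Set.Icc 0 kg, h k₁ = h k₁star → k₁ = k₁star) := by
  set Q : ℝ := (∑ i, c i * b β i) + r β with hQ
  set S : ℝ := ∑ i, ∑ j, c i * b j i with hS
  set P : ℝ := θ α * θ β * (1 + c α) * b β α with hP
  have hθα : θ α ≠ 0 := by rintro h0; rw [hP] at hpos; simp [h0] at hpos
  have hθβ : θ β ≠ 0 := by rintro h0; rw [hP] at hpos; simp [h0] at hpos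
  have hcα : (1 + c α) ≠ 0 := by rintro h0; rw [hP] at hpos; simp [h0] at hpos
  have hbβα : b β α ≠ 0 := by rintro h0; rw [hP] at hpos; simp [h0] at hpos
  set A : ℝ := -(P / 4) with hA
  have hA0 : A < 0 := by rw [hA]; linarith
  set B : ℝ := (θ α / 2) * (1 + c α) * s α - (θ β / 2) * Q + kg * (P / 4) with hB
  set C : ℝ := S + kg * (θ β / 2) * Q with hCdef
  have hquad : ∀ t : ℝ, h t = A * t ^ 2 + B * t + C := by
    intro t; rw [hh t, hA, hB, hCdef, hP]; ring
  set v : ℝ := kg / 2 + s α / (θ β * b β α) - Q / (θ α * b β α * (1 + c α)) with hv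
  have hBv : B = -2 * A * v := by
    rw [hB, hA, hv, hP]; field_simp; ring
  have hdiff : ∀ t u : ℝ, h u - h t = A * (u - t) * (u + t - 2 * v) := by
    intro t u; rw [hquad t, hquad u, hBv]; ring
  have hks : k₁star = min (max v 0) kg := hk₁star
  refine ⟨⟨A, B, C, hA0, hquad⟩, ?_, ?_, ?_, ?_⟩
  · refine ⟨convex_univ, ?_⟩
    intro x _ y _ hxy a bb ha hb hab
    have key : h (a • x + bb • y) - (a • h x + bb • h y) = -A * a * bb * (x - y) ^ 2 := by
      simp only [smul_eq_mul, hquad]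
      have : bb = 1 - a := by linarith
      subst this; ring
    have hxy' : x - y ≠ 0 := sub_ne_zero.mpr hxy
    have hx2 : (0:ℝ) < (x - y) ^ 2 := by positivity
    have hpos2 : (0:ℝ) < -A * a * bb * (x - y) ^ 2 :=
      mul_pos (mul_pos (mul_pos (neg_pos.mpr hA0) ha) hb) hx2
    simp only [smul_eq_mul] at key ⊢
    linarith [key]
  · constructor
    · rw [hks]; exact le_min (le_max_right _ _) (le_of_lt hkg)
    · rw [hks]; exact min_le_right _ _
  · intro k₁ hk₁
    obtain ⟨hk0, hkk⟩ := hk₁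
    have key : h k₁star - h k₁ = A * (k₁star - k₁) * (k₁star + k₁ - 2 * v) := hdiff k₁ k₁star
    have hprod : (k₁star - k₁) * (k₁star + k₁ - 2 * v) ≤ 0 := by
      rcases le_or_gt v 0 with hv0 | hv0
      · have : k₁star = 0 := by rw [hks, max_eq_right hv0]; exact min_eq_left (le_of_lt hkg)
        rw [this]; nlinarith
      rcases le_or_gt kg v with hvk | hvk
      · have : k₁star = kg := by
          rw [hks, max_eq_left (le_of_lt hv0)]; exact min_eq_right hvk
        rw [this]; nlinarith
      · have : k₁star = v := by
          rw [hks, max_eq_left (le_of_lt hv0)]; exact min_eq_left (le_of_lt hvk)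
        rw [this]; nlinarith [sq_nonneg (v - k₁)]
    nlinarith [key, mul_nonneg (neg_nonneg.mpr hA0.le) (neg_nonneg.mpr hprod)]
  · intro k₁ hk₁ heq
    obtain ⟨hk0, hkk⟩ := hk₁
    have key : h k₁star - h k₁ = A * (k₁star - k₁) * (k₁star + k₁ - 2 * v) := hdiff k₁ k₁star
    rw [heq, sub_self] at key
    have hprod : (k₁star - k₁) * (k₁star + k₁ - 2 * v) = 0 := by
      rcases mul_eq_zero.mp (by nlinarith : A * ((k₁star - k₁) * (k₁star + k₁ - 2 * v)) = 0) with h0 | h0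
      · exact absurd h0 (ne_of_lt hA0)
      · exact h0
    rcases mul_eq_zero.mp hprod with h0 | h0
    · linarith
    · rcases le_or_gt v 0 with hv0 | hv0
      · have hst : k₁star = 0 := by rw [hks, max_eq_right hv0]; exact min_eq_left (le_of_lt hkg)
        rw [hst] at h0 ⊢; linarith
      rcases le_or_gt kg v with hvk | hvk
      · have hst : k₁star = kg := by
          rw [hks, max_eq_left (le_of_lt hv0)]; exact min_eq_right hvk
        rw [hst] at h0 ⊢; linarith
      · have hst : k₁star = v := by
          rw [hks, max_eq_left (le_of_lt hv0)]; exact min_eq_left (le_of_lt hvk)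
        rw [hst] at h0 ⊢; linarith
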